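/- Let X be a real topological vector space whose topology is induced by a complete translation-invariant metric d (a Fréchet space), and let T : X → X be a continuous linear operator. Assume that the linear span of NS(T) is dense in X and that (X,T) is equicontinuous. Then for every nonempty compact set K ⊆ X, the Hausdorff distance d_H(Tⁿ(K), {0_X}) converges to 0 as n → ∞. -/

import Mathlib

open Filter Metric

/-- The system `(Y,g)` is equicontinuous: for every `ε > 0` there is `δ > 0` such that
`d(y,z) < δ` implies `d(gⁿ(y), gⁿ(z)) < ε` for all `n ∈ ℕ`. -/
def EquicontinuousSystem {Y : Type*} [MetricSpace Y] (g : Y → Y) : Prop :=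
  ∀ ε > 0, ∃ δ > 0, ∀ y z : Y, dist y z < δ →
    ∀ n : ℕ, 1 ≤ n → dist (g^[n] y) (g^[n] z) < ε

/-- `NS(T)`: the set of vectors whose `T`-orbit admits a subsequence converging to `0`. -/
def nullSubOrbit {X : Type*} [AddCommGroup X] [Module ℝ X] [MetricSpace X] (T : X → X) :
    Set X :=
  {x : X | ∃ φ : ℕ → ℕ, StrictMono φ ∧ Tendsto (fun k => T^[φ k] x) atTop (nhds 0)}

/-- Let `T` be a continuous linear operator on a Fréchet space (a real topological vector
space whose topology comes from a complete translation-invariant metric). If the linear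
span of `NS(T)` is dense and `(X,T)` is equicontinuous, then for every nonempty compact
set `K` the Hausdorff distance `d_H(Tⁿ(K), {0})` converges to `0`. -/
theorem hausdorffDist_image_tendsto_zero_of_equicontinuous
    {X : Type*} [AddCommGroup X] [Module ℝ X] [MetricSpace X] [CompleteSpace X]
    [IsTopologicalAddGroup X] [ContinuousSMul ℝ X]
    (hinv : ∀ x y z : X, dist (x + z) (y + z) = dist x y)
    (T : X →L[ℝ] X)
    (hdense : Dense ((Submodule.span ℝ (nullSubOrbit ⇑T) : Submodule ℝ X) : Set X))
    (hequi : EquicontinuousSystem ⇑T) :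
    ∀ K : Set X, IsCompact K → K.Nonempty →
      Tendsto (fun n : ℕ => hausdorffDist ((⇑T)^[n] '' K) {(0 : X)}) atTop (nhds 0) := by
  have hfix : ∀ n : ℕ, (⇑T)^[n] (0 : X) = 0 := fun n =>
    Function.iterate_fixed (map_zero T) n
  have hadd : ∀ (n : ℕ) (x y : X), (⇑T)^[n] (x + y) = (⇑T)^[n] x + (⇑T)^[n] y := by
    intro n
    induction n with
    | zero => intro x y; simp
    | succ n ih => intro x y; simp [Function.iterate_succ_apply, map_add, ih]
  have hsmul : ∀ (n : ℕ) (a : ℝ) (x : X), (⇑T)^[n] (a • x) = a • (⇑T)^[n] x := by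
    intro n
    induction n with
    | zero => intro a x; simp
    | succ n ih => intro a x; simp [Function.iterate_succ_apply, map_smul, ih]
  -- orbit of any point of NS tends to 0
  have hNS : ∀ x ∈ nullSubOrbit (⇑T), Tendsto (fun n => (⇑T)^[n] x) atTop (nhds 0) := by
    intro x hx
    obtain ⟨φ, hφ, hlim⟩ := hx
    rw [Metric.tendsto_atTop]
    intro ε hε
    obtain ⟨δ, hδ, hδ'⟩ := hequi ε hε
    obtain ⟨k, hk⟩ := ((Metric.tendsto_nhds.1 hlim) δ hδ).exists
    refine ⟨φ k + 1, fun n hn => ?_⟩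
    have h1 : (n - φ k) + φ k = n := Nat.sub_add_cancel (le_trans (Nat.le_succ _) hn)
    have h2 : 1 ≤ n - φ k := by omega
    have := hδ' ((⇑T)^[φ k] x) 0 hk (n - φ k) h2
    rwa [← Function.iterate_add_apply, h1, hfix] at this
  -- orbit of any point of the span tends to 0
  have hspan : ∀ x ∈ Submodule.span ℝ (nullSubOrbit ⇑T),
      Tendsto (fun n => (⇑T)^[n] x) atTop (nhds 0) := by
    intro x hx
    induction hx using Submodule.span_induction with
    | mem y hy => exact hNS y hy
    | zero => simp only [hfix]; exact (tendsto_const_nhds : Tendsto (fun _ : ℕ => (0:X)) atTop _)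
    | add y z _ _ ihy ihz =>
        have : Tendsto (fun n => (⇑T)^[n] y + (⇑T)^[n] z) atTop (nhds (0 + 0)) := ihy.add ihz
        simpa [hadd] using this
    | smul a y _ ihy =>
        have : Tendsto (fun n => a • (⇑T)^[n] y) atTop (nhds (a • (0:X))) := ihy.const_smul a
        simpa [hsmul] using this
  -- orbit of every point tends to 0
  have hall : ∀ x : X, Tendsto (fun n => (⇑T)^[n] x) atTop (nhds 0) := by
    intro x
    rw [Metric.tendsto_atTop]
    intro ε hε
    obtain ⟨δ, hδ, hδ'⟩ := hequi (ε / 2) (by linarith)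
    obtain ⟨y, hy, hxy⟩ : ∃ y ∈ (Submodule.span ℝ (nullSubOrbit ⇑T) : Submodule ℝ X),
        dist x y < δ := by
      obtain ⟨y, hy1, hy2⟩ := (Metric.dense_iff.1 hdense x δ hδ)
      exact ⟨y, hy2, by simpa [dist_comm] using Metric.mem_ball.1 hy1⟩
    obtain ⟨N, hN⟩ := (Metric.tendsto_atTop.1 (hspan y hy)) (ε / 2) (by linarith)
    refine ⟨max N 1, fun n hn => ?_⟩
    have h1 : dist ((⇑T)^[n] x) ((⇑T)^[n] y) < ε / 2 :=
      hδ' x y hxy n (le_trans (le_max_right N 1) hn)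
    have h2 : dist ((⇑T)^[n] y) 0 < ε / 2 := hN n (le_trans (le_max_left N 1) hn)
    calc dist ((⇑T)^[n] x) 0 ≤ dist ((⇑T)^[n] x) ((⇑T)^[n] y) + dist ((⇑T)^[n] y) 0 :=
          dist_triangle _ _ _
      _ < ε / 2 + ε / 2 := by linarith
      _ = ε := by ring
  -- main statement
  intro K hK ⟨z₀, hz₀⟩
  rw [Metric.tendsto_atTop]
  intro ε hε
  obtain ⟨δ, hδ, hδ'⟩ := hequi (ε / 4) (by linarith)
  obtain ⟨t, hts, hcover⟩ := hK.elim_nhds_subcover (fun x => ball x δ)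
    (fun x _ => ball_mem_nhds x hδ)
  have hev : ∀ᶠ n in atTop, (1 ≤ n ∧ ∀ x ∈ t, dist ((⇑T)^[n] x) 0 < ε / 4) := by
    refine (eventually_ge_atTop 1).and ?_
    rw [eventually_all_finset]
    intro x _
    exact (Metric.tendsto_nhds.1 (hall x)) (ε / 4) (by linarith)
  obtain ⟨N, hN⟩ := eventually_atTop.1 hev
  refine ⟨N, fun n hn => ?_⟩
  obtain ⟨hn1, hnt⟩ := hN n hn
  have hpt : ∀ z ∈ K, dist ((⇑T)^[n] z) 0 ≤ ε / 2 := by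
    intro z hz
    obtain ⟨x, hxt, hzx⟩ := Set.mem_iUnion₂.1 (hcover hz)
    have hd1 : dist ((⇑T)^[n] z) ((⇑T)^[n] x) < ε / 4 :=
      hδ' z x (by simpa [Metric.mem_ball] using hzx) n hn1
    have hd2 : dist ((⇑T)^[n] x) 0 < ε / 4 := hnt x hxt
    calc dist ((⇑T)^[n] z) 0 ≤ dist ((⇑T)^[n] z) ((⇑T)^[n] x) + dist ((⇑T)^[n] x) 0 :=
          dist_triangle _ _ _
      _ ≤ ε / 2 := by linarith
  have hle : hausdorffDist ((⇑T)^[n] '' K) {(0 : X)} ≤ ε / 2 := by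
    apply hausdorffDist_le_of_mem_dist (by linarith)
    · rintro p ⟨z, hz, rfl⟩
      exact ⟨0, rfl, hpt z hz⟩
    · rintro q rfl
      exact ⟨(⇑T)^[n] z₀, ⟨z₀, hz₀, rfl⟩, by rw [dist_comm]; exact hpt z₀ hz₀⟩
  have hnn : (0:ℝ) ≤ hausdorffDist ((⇑T)^[n] '' K) {(0 : X)} := hausdorffDist_nonneg
  rw [Real.dist_eq]
  rw [abs_of_nonneg (by linarith)]
  linarith
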